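/- Boundary consistency estimate: let (X,d) be a complete rectifiably connected metric space with intrinsic metric d̃ satisfying the consistency condition, Ω ⊊ X open, f: cl Ω → ℝ continuous, bounded, f ≥ 0, and ζ: ∂Ω → ℝ L-Lipschitz with respect to d̃. Define u(x) = inf over admissible curves ξ with ξ(0)=x of ∫₀^{T⁺} f(ξ(s)) ds + ζ(ξ(T⁺)), where T⁺ is the exit time of ξ from Ω. Then u(x) − ζ(y) ≤ d̃(x,y) · max{L, sup_{cl Ω} f} for all x ∈ Ω and y ∈ ∂Ω. -/

import Mathlib

open Filter Topology Set

/-- The intrinsic (path) metric induced by `d`, as an extended real. -/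
noncomputable def intrinsicEDist {X : Type*} [MetricSpace X] (x y : X) : ENNReal :=
  ⨅ (ξ : ℝ → X) (_ : ContinuousOn ξ (Set.Icc 0 1)) (_ : ξ 0 = x) (_ : ξ 1 = y),
    eVariationOn ξ (Set.Icc 0 1)

/-- The intrinsic metric as a real-valued function. -/
noncomputable def intrinsicDist {X : Type*} [MetricSpace X] (x y : X) : ℝ :=
  (intrinsicEDist x y).toReal

/-- The exit time `T⁺_Ω[ξ] = inf{t ≥ 0 : ξ(t) ∉ Ω}`. -/
noncomputable def exitTime {X : Type*} [MetricSpace X] (Ω : Set X) (ξ : ℝ → X) : ℝ :=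
  sInf {t : ℝ | 0 ≤ t ∧ ξ t ∉ Ω}

/-- The set of control values `∫₀^{T⁺} f(ξ(s)) ds + ζ(ξ(T⁺))` over admissible
(1-Lipschitz) curves starting at `x` that exit `Ω`. -/
noncomputable def controlSet {X : Type*} [MetricSpace X] (Ω : Set X)
    (f ζ : X → ℝ) (x : X) : Set ℝ :=
  (fun ξ : ℝ → X =>
      (∫ s in (0 : ℝ)..(exitTime Ω ξ), f (ξ s)) + ζ (ξ (exitTime Ω ξ))) ''
    {ξ : ℝ → X | LipschitzWith 1 ξ ∧ ξ 0 = x ∧ ∃ t : ℝ, 0 ≤ t ∧ ξ t ∉ Ω}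

/-- The value function of the optimal control problem. -/
noncomputable def uControl {X : Type*} [MetricSpace X] (Ω : Set X)
    (f ζ : X → ℝ) (x : X) : ℝ :=
  sInf (controlSet Ω f ζ x)

section BVAux
open Set

variable {X : Type*} [MetricSpace X]

lemma extract_var (g : ℝ → X) (a b : ℝ) {t s : ℝ} (ht : t ∈ Icc a b) (hs : s ∈ Icc a b)
    (hts : t < s) {ε : ℝ} (hε : 0 < ε)
    (hvar : ENNReal.ofReal ε ≤ eVariationOn g (Icc a b ∩ Icc t s))
    (hsmall : ∀ w ∈ Icc a b ∩ Icc t s, edist (g w) (g t) ≤ ENNReal.ofReal (ε/4)) :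
    ∃ t' ∈ Ioc t s, ENNReal.ofReal (ε/2) ≤ eVariationOn g (Icc a b ∩ Icc t' s) := by
  have h34 : ENNReal.ofReal (3*ε/4) < eVariationOn g (Icc a b ∩ Icc t s) :=
    lt_of_lt_of_le (by rw [ENNReal.ofReal_lt_ofReal_iff hε]; linarith) hvar
  rw [eVariationOn, lt_iSup_iff] at h34
  obtain ⟨⟨n, ⟨u, hu, hus⟩⟩, hsum⟩ := h34
  simp only at hsum
  have hut : ∀ i, t ≤ u i := fun i => (hus i).2.1
  have hus' : ∀ i, u i ≤ s := fun i => (hus i).2.2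
  have hex : ∃ i, t < u i := by
    by_contra h; push_neg at h
    have he : ∀ i, u i = t := fun i => le_antisymm (h i) (hut i)
    rw [Finset.sum_eq_zero (fun i _ => by rw [he (i+1), he i, edist_self])] at hsum
    exact absurd hsum (by simp)
  have hti : t < u (Nat.find hex) := Nat.find_spec hex
  set i₀ := Nat.find hex with hi₀
  have hmin : ∀ i, i < i₀ → u i = t := fun i hi =>
    le_antisymm (not_lt.mp (Nat.find_min hex hi)) (hut i)
  have hmem : u i₀ ∈ Icc a b ∩ Icc t s := ⟨(hus i₀).1, hti.le, hus' i₀⟩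
  refine ⟨u i₀, ⟨hti, hus' i₀⟩, ?_⟩
  set w : ℕ → ℝ := fun i => max (u i) (u i₀) with hwdef
  have hwmono : Monotone w := hu.max monotone_const
  have hws : ∀ i, w i ∈ (Icc a b ∩ Icc (u i₀) s) := by
    intro i
    rcases le_total (u i) (u i₀) with h | h
    · have : w i = u i₀ := max_eq_right h
      rw [this]; exact ⟨(hus i₀).1, le_rfl, hus' i₀⟩
    · have : w i = u i := max_eq_left h
      rw [this]; exact ⟨(hus i).1, h, hus' i⟩
  have hnew := eVariationOn.sum_le (f := g) (n := n) hwmono hws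
  have hcompare : ∀ i ∈ Finset.range n,
      edist (g (u (i+1))) (g (u i)) ≤ edist (g (w (i+1))) (g (w i)) +
        (if i + 1 = i₀ then ENNReal.ofReal (ε/4) else 0) := by
    intro i _
    rcases lt_trichotomy (i+1) i₀ with h | h | h
    · rw [hmin _ h, hmin _ (Nat.lt_of_succ_lt h), edist_self]; simp
    · rw [if_pos h]
      have h1 : u i = t := hmin i (by omega)
      have h2 : edist (g (u (i+1))) (g (u i)) ≤ ENNReal.ofReal (ε/4) := by
        rw [h1, h]; exact hsmall _ hmem
      exact h2.trans le_add_self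
    · rw [if_neg (by omega)]
      have h1 : u i₀ ≤ u i := hu (by omega)
      have h2 : u i₀ ≤ u (i+1) := hu (by omega)
      have e1 : w i = u i := max_eq_left h1
      have e2 : w (i+1) = u (i+1) := max_eq_left h2
      rw [e1, e2, add_zero]
  have hle : (∑ i ∈ Finset.range n, edist (g (u (i+1))) (g (u i))) ≤
      (∑ i ∈ Finset.range n, edist (g (w (i+1))) (g (w i))) + ENNReal.ofReal (ε/4) := by
    refine le_trans (Finset.sum_le_sum hcompare) ?_
    rw [Finset.sum_add_distrib]
    gcongr
    rcases i₀ with _ | j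
    · simp
    · have : ∀ i, (i + 1 = j + 1) = (i = j) := fun i => by simp
      simp only [this]
      rw [Finset.sum_ite_eq' (Finset.range n) j (fun _ => ENNReal.ofReal (ε/4))]
      split_ifs <;> simp
  by_contra hcon
  push_neg at hcon
  have hwlt : (∑ i ∈ Finset.range n, edist (g (w (i+1))) (g (w i))) < ENNReal.ofReal (ε/2) :=
    lt_of_le_of_lt hnew hcon
  have h1 : ENNReal.ofReal (3*ε/4) < ENNReal.ofReal (ε/2) + ENNReal.ofReal (ε/4) :=
    (hsum.trans_le hle).trans (ENNReal.add_lt_add_right (by simp) hwlt)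
  rw [← ENNReal.ofReal_add (by linarith) (by linarith)] at h1
  have he : (3*ε/4 : ℝ) = ε/2 + ε/4 := by ring
  rw [he] at h1
  exact lt_irrefl _ h1

lemma right_small (g : ℝ → X) {a b t : ℝ} (ht : t ∈ Icc a b) (htb : t < b)
    (hg : ContinuousOn g (Icc a b)) (hfin : eVariationOn g (Icc a b) ≠ ⊤)
    {ε : ℝ} (hε : 0 < ε) :
    ∃ s, t < s ∧ s ≤ b ∧ eVariationOn g (Icc a b ∩ Icc t s) < ENNReal.ofReal ε := by
  by_contra h; push_neg at h
  obtain ⟨δ, hδ, hcont⟩ := Metric.continuousWithinAt_iff.mp (hg t ht) (ε/4) (by linarith)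
  have hsmall : ∀ w ∈ Icc a b, dist w t < δ → edist (g w) (g t) ≤ ENNReal.ofReal (ε/4) := by
    intro w hw hd
    rw [edist_dist]; exact ENNReal.ofReal_le_ofReal (hcont hw hd).le
  set s₀ := min (t + δ/2) b with hs₀
  have hts₀ : t < s₀ := lt_min (by linarith) htb
  have hs₀b : s₀ ≤ b := min_le_right _ _
  have key : ∀ n : ℕ, ∃ t', t' ∈ Ioc t s₀ ∧
      ENNReal.ofReal (n * (ε/2)) ≤ eVariationOn g (Icc a b ∩ Icc t' s₀) := by
    intro n; induction n with
    | zero => exact ⟨s₀, ⟨hts₀, le_rfl⟩, by simp⟩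
    | succ m ih =>
      obtain ⟨t', ⟨htt', ht's₀⟩, hvar'⟩ := ih
      have ht'I : t' ∈ Icc a b := ⟨le_trans ht.1 htt'.le, le_trans ht's₀ hs₀b⟩
      have hvart : ENNReal.ofReal ε ≤ eVariationOn g (Icc a b ∩ Icc t t') := h t' htt' ht'I.2
      have hsm : ∀ w ∈ Icc a b ∩ Icc t t', edist (g w) (g t) ≤ ENNReal.ofReal (ε/4) := by
        rintro w ⟨hw1, hw2⟩
        apply hsmall w hw1
        rw [Real.dist_eq, abs_of_nonneg (by linarith [hw2.1])]
        have : w ≤ t + δ/2 := le_trans hw2.2 (le_trans ht's₀ (min_le_left _ _))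
        linarith
      obtain ⟨t'', ⟨htt'', ht''t'⟩, hvar''⟩ := extract_var g a b ht ht'I htt' hε hvart hsm
      refine ⟨t'', ⟨htt'', le_trans ht''t' ht's₀⟩, ?_⟩
      have hadd := eVariationOn.Icc_add_Icc g (s := Icc a b) ht''t' ht's₀ ht'I
      calc ENNReal.ofReal ((m+1 : ℕ) * (ε/2))
          = ENNReal.ofReal (ε/2) + ENNReal.ofReal (m * (ε/2)) := by
            rw [← ENNReal.ofReal_add (by linarith) (by positivity)]; push_cast; ring_nf
        _ ≤ eVariationOn g (Icc a b ∩ Icc t'' t') + eVariationOn g (Icc a b ∩ Icc t' s₀) :=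
            add_le_add hvar'' hvar'
        _ = eVariationOn g (Icc a b ∩ Icc t'' s₀) := hadd
  obtain ⟨n, hn⟩ := exists_nat_gt ((eVariationOn g (Icc a b)).toReal / (ε/2))
  obtain ⟨t', ht', hvar'⟩ := key n
  have h2 : ENNReal.ofReal (n * (ε/2)) ≤ eVariationOn g (Icc a b) :=
    hvar'.trans (eVariationOn.mono g inter_subset_left)
  have h3 : (n : ℝ) * (ε/2) ≤ (eVariationOn g (Icc a b)).toReal := by
    rw [← ENNReal.toReal_ofReal (by positivity : (0:ℝ) ≤ (n:ℝ) * (ε/2))]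
    exact ENNReal.toReal_mono hfin h2
  rw [div_lt_iff₀ (by linarith)] at hn
  linarith

lemma left_small (g : ℝ → X) {a b t : ℝ} (ht : t ∈ Icc a b) (hat : a < t)
    (hg : ContinuousOn g (Icc a b)) (hfin : eVariationOn g (Icc a b) ≠ ⊤)
    {ε : ℝ} (hε : 0 < ε) :
    ∃ s, a ≤ s ∧ s < t ∧ eVariationOn g (Icc a b ∩ Icc s t) < ENNReal.ofReal ε := by
  set φ : ℝ → ℝ := fun r => a + b - r with hφdef
  have hφinj : Function.Injective φ := fun x y h => by simp [hφdef] at h; linarith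
  have hφI : φ '' Icc a b = Icc a b := by
    rw [show φ = (fun r => (a+b) - r) from rfl, image_const_sub_Icc]
    congr 1 <;> ring
  have hφmaps : MapsTo φ (Icc a b) (Icc a b) := by
    conv_rhs => rw [← hφI]
    exact mapsTo_image φ _
  have hg' : ContinuousOn (g ∘ φ) (Icc a b) :=
    hg.comp ((continuous_const.sub continuous_id).continuousOn) hφmaps
  have hcomp : ∀ u w : ℝ, eVariationOn (g ∘ φ) (Icc a b ∩ Icc u w) =
      eVariationOn g (Icc a b ∩ Icc (a+b-w) (a+b-u)) := by
    intro u w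
    rw [eVariationOn.comp_eq_of_antitoneOn g φ
      (fun x _ y _ hxy => by simp only [hφdef]; linarith)]
    congr 1
    rw [Set.image_inter hφinj, hφI,
      show φ '' Icc u w = (fun r => (a+b) - r) '' Icc u w from rfl, image_const_sub_Icc]
  have hfin' : eVariationOn (g ∘ φ) (Icc a b) ≠ ⊤ := by
    have := eVariationOn.comp_eq_of_antitoneOn g φ
      (fun x (_ : x ∈ Icc a b) y _ hxy => by simp only [hφdef]; linarith)
    rw [hφI] at this; rw [this]; exact hfin
  have htI : a + b - t ∈ Icc a b := ⟨by linarith [ht.2], by linarith [ht.1]⟩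
  obtain ⟨s', hs'1, hs'2, hs'3⟩ := right_small (g ∘ φ) htI (by linarith) hg' hfin' hε
  refine ⟨a + b - s', by linarith, by linarith, ?_⟩
  rw [hcomp] at hs'3
  have he : a + b - (a + b - t) = t := by ring
  rwa [he] at hs'3

lemma variation_continuousOn (g : ℝ → X) {a b : ℝ} (hab : a ≤ b)
    (hg : ContinuousOn g (Icc a b)) (hfin : eVariationOn g (Icc a b) ≠ ⊤) :
    ContinuousOn (variationOnFromTo g (Icc a b) a) (Icc a b) := by
  have hbv : LocallyBoundedVariationOn g (Icc a b) := fun p q _ _ =>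
    ((eVariationOn.mono g inter_subset_left).trans_lt hfin.lt_top).ne
  intro t ht
  rw [Metric.continuousWithinAt_iff]
  intro ε hε
  have hdeg : ∀ w : ℝ, eVariationOn g (Icc a b ∩ Icc w w) < ENNReal.ofReal ε := by
    intro w
    have hsub : eVariationOn g (Icc a b ∩ Icc w w) = 0 := by
      apply eVariationOn.subsingleton g
      intro p hp q hq
      have : p = w := le_antisymm hp.2.2 hp.2.1
      have : q = w := le_antisymm hq.2.2 hq.2.1
      simp_all
    rw [hsub]; exact ENNReal.ofReal_pos.2 hε
  have hright : ∃ δR > 0, ∀ w ∈ Icc a b, t ≤ w → w - t < δR →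
      eVariationOn g (Icc a b ∩ Icc t w) < ENNReal.ofReal ε := by
    rcases lt_or_ge t b with htb | htb
    · obtain ⟨s, hs1, hs2, hs3⟩ := right_small g ht htb hg hfin hε
      refine ⟨s - t, by linarith, fun w hw htw hw2 => lt_of_le_of_lt
        (eVariationOn.mono g ?_) hs3⟩
      rintro z ⟨hz1, hz2, hz3⟩
      exact ⟨hz1, hz2, by linarith⟩
    · refine ⟨1, one_pos, fun w hw htw hw2 => ?_⟩
      have hwt : w = t := le_antisymm (le_trans hw.2 htb) htw
      rw [hwt]; exact hdeg t
  have hleft : ∃ δL > 0, ∀ w ∈ Icc a b, w ≤ t → t - w < δL →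
      eVariationOn g (Icc a b ∩ Icc w t) < ENNReal.ofReal ε := by
    rcases lt_or_ge a t with hat | hat
    · obtain ⟨s, hs1, hs2, hs3⟩ := left_small g ht hat hg hfin hε
      refine ⟨t - s, by linarith, fun w hw htw hw2 => lt_of_le_of_lt
        (eVariationOn.mono g ?_) hs3⟩
      rintro z ⟨hz1, hz2, hz3⟩
      exact ⟨hz1, by linarith, hz3⟩
    · refine ⟨1, one_pos, fun w hw htw hw2 => ?_⟩
      have hwt : w = t := le_antisymm htw (le_trans hat hw.1)
      rw [hwt]; exact hdeg t
  obtain ⟨δR, hδR, hR⟩ := hright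
  obtain ⟨δL, hδL, hL⟩ := hleft
  refine ⟨min δR δL, lt_min hδR hδL, fun w hw hdist => ?_⟩
  have hadd := variationOnFromTo.add hbv (left_mem_Icc.2 hab) ht hw
  have heq : variationOnFromTo g (Icc a b) a w - variationOnFromTo g (Icc a b) a t =
      variationOnFromTo g (Icc a b) t w := by linarith [hadd]
  rw [Real.dist_eq, heq]
  rw [Real.dist_eq] at hdist
  rcases le_total t w with htw | hwt
  · rw [variationOnFromTo.eq_of_le g _ htw, abs_of_nonneg ENNReal.toReal_nonneg]
    have hd2 : w - t < δR := by
      rw [abs_of_nonneg (by linarith)] at hdist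
      exact lt_of_lt_of_le hdist (min_le_left _ _)
    exact ENNReal.toReal_lt_of_lt_ofReal (hR w hw htw hd2)
  · rw [variationOnFromTo.eq_of_ge g _ hwt, abs_neg, abs_of_nonneg ENNReal.toReal_nonneg]
    have hd2 : t - w < δL := by
      rw [abs_sub_comm, abs_of_nonneg (by linarith)] at hdist
      exact lt_of_lt_of_le hdist (min_le_right _ _)
    exact ENNReal.toReal_lt_of_lt_ofReal (hL w hw hwt hd2)

lemma variation_image (g : ℝ → X) {a b : ℝ} (hab : a ≤ b)
    (hg : ContinuousOn g (Icc a b)) (hfin : eVariationOn g (Icc a b) ≠ ⊤) :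
    variationOnFromTo g (Icc a b) a '' Icc a b = Icc 0 ((eVariationOn g (Icc a b)).toReal) := by
  apply Subset.antisymm
  · rintro _ ⟨t, ht, rfl⟩
    refine ⟨variationOnFromTo.nonneg_of_le g _ ht.1, ?_⟩
    rw [variationOnFromTo.eq_of_le g _ ht.1]
    exact ENNReal.toReal_mono hfin (eVariationOn.mono g inter_subset_left)
  · have him := intermediate_value_Icc hab (variation_continuousOn g hab hg hfin)
    have e1 : variationOnFromTo g (Icc a b) a a = 0 := variationOnFromTo.self _ _ _
    have e2 : variationOnFromTo g (Icc a b) a b = (eVariationOn g (Icc a b)).toReal := by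
      rw [variationOnFromTo.eq_of_le g _ hab, inter_self]
    rw [e1, e2] at him; exact him

lemma clamp_lipschitz (ℓ : ℝ) : LipschitzWith 1 (fun t : ℝ => max 0 (min t ℓ)) := by
  apply LipschitzWith.of_dist_le_mul
  intro s t
  rw [NNReal.coe_one, one_mul, Real.dist_eq, Real.dist_eq]
  have h1 : |min s ℓ - min t ℓ| ≤ |s - t| := by
    rcases le_total s ℓ with h | h <;> rcases le_total t ℓ with h' | h' <;>
      simp [min_eq_left, min_eq_right, h, h', abs_le] <;> cases abs_cases (s - t) <;>
      cases abs_cases (s - ℓ) <;> cases abs_cases (ℓ - t) <;> constructor <;> linarith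
  calc |max 0 (min s ℓ) - max 0 (min t ℓ)|
      = |min s ℓ ⊔ 0 - min t ℓ ⊔ 0| := by rw [max_comm 0, max_comm 0]
    _ ≤ |min s ℓ - min t ℓ| := abs_max_sub_max_le_abs _ _ _
    _ ≤ |s - t| := h1

end BVAux

section CurveAux
open Set

variable {X : Type*} [MetricSpace X]

lemma exists_good_curve (x y : X) {ε : ℝ} (hε : 0 < ε) (hrect : intrinsicEDist x y < ⊤) :
    ∃ (ξ : ℝ → X) (ℓ : ℝ), 0 ≤ ℓ ∧ ℓ ≤ intrinsicDist x y + ε ∧ LipschitzWith 1 ξ ∧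
      ξ 0 = x ∧ (∀ t, ℓ ≤ t → ξ t = y) ∧
      ∀ p q : ℝ, 0 ≤ p → p ≤ q → q ≤ ℓ →
        intrinsicEDist (ξ p) (ξ q) ≤ ENNReal.ofReal (q - p) := by
  set B := intrinsicEDist x y + ENNReal.ofReal ε with hB
  have hBt : B ≠ ⊤ := ENNReal.add_ne_top.2 ⟨hrect.ne, ENNReal.ofReal_ne_top⟩
  have hlt : intrinsicEDist x y < B :=
    ENNReal.lt_add_right hrect.ne (by simp [ENNReal.ofReal_eq_zero]; linarith)
  rw [intrinsicEDist] at hlt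
  obtain ⟨g, hlt⟩ := iInf_lt_iff.mp hlt
  obtain ⟨hgc, hlt⟩ := iInf_lt_iff.mp hlt
  obtain ⟨hg0, hlt⟩ := iInf_lt_iff.mp hlt
  obtain ⟨hg1, hlt⟩ := iInf_lt_iff.mp hlt
  have hfin : eVariationOn g (Icc (0:ℝ) 1) ≠ ⊤ := (hlt.trans_le le_top).ne
  have hbv : LocallyBoundedVariationOn g (Icc (0:ℝ) 1) := fun p q _ _ =>
    ((eVariationOn.mono g inter_subset_left).trans_lt hfin.lt_top).ne
  set ℓ := (eVariationOn g (Icc (0:ℝ) 1)).toReal with hℓ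
  have hℓ0 : 0 ≤ ℓ := ENNReal.toReal_nonneg
  have h01 : (0:ℝ) ∈ Icc (0:ℝ) 1 := left_mem_Icc.2 zero_le_one
  have h11 : (1:ℝ) ∈ Icc (0:ℝ) 1 := right_mem_Icc.2 zero_le_one
  have himg : variationOnFromTo g (Icc (0:ℝ) 1) 0 '' Icc (0:ℝ) 1 = Icc 0 ℓ :=
    variation_image g zero_le_one hgc hfin
  set γ := naturalParameterization g (Icc (0:ℝ) 1) 0 with hγ
  have hunit : HasUnitSpeedOn γ (Icc 0 ℓ) := by
    rw [← himg]; exact has_unit_speed_naturalParameterization g hbv h01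
  have hγx : γ 0 = x := by
    have h0 := edist_naturalParameterization_eq_zero hbv h01 h01
    rw [variationOnFromTo.self] at h0
    rw [← hg0]; exact edist_eq_zero.mp h0
  have hγy : γ ℓ = y := by
    have h0 := edist_naturalParameterization_eq_zero hbv h01 h11
    have he : variationOnFromTo g (Icc (0:ℝ) 1) 0 1 = ℓ := by
      rw [variationOnFromTo.eq_of_le g _ zero_le_one, inter_self]
    rw [he] at h0
    rw [← hg1]; exact edist_eq_zero.mp h0
  have hlipγ : LipschitzOnWith 1 γ (Icc 0 ℓ) := by
    intro p hp q hq
    rcases le_total p q with h | h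
    · calc edist (γ p) (γ q) ≤ eVariationOn γ (Icc 0 ℓ ∩ Icc p q) :=
            eVariationOn.edist_le γ ⟨hp, le_rfl, h⟩ ⟨hq, h, le_rfl⟩
        _ = ENNReal.ofReal ((1:NNReal) * (q - p)) := hunit hp hq
        _ ≤ 1 * edist p q := by
            rw [edist_dist, Real.dist_eq, one_mul, NNReal.coe_one, one_mul, abs_sub_comm]
            exact ENNReal.ofReal_le_ofReal (le_abs_self _)
    · calc edist (γ p) (γ q) ≤ eVariationOn γ (Icc 0 ℓ ∩ Icc q p) :=
            eVariationOn.edist_le γ ⟨hp, h, le_rfl⟩ ⟨hq, le_rfl, h⟩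
        _ = ENNReal.ofReal ((1:NNReal) * (p - q)) := hunit hq hp
        _ ≤ 1 * edist p q := by
            rw [edist_dist, Real.dist_eq, one_mul, NNReal.coe_one, one_mul]
            exact ENNReal.ofReal_le_ofReal (le_abs_self _)
  set clamp : ℝ → ℝ := fun t => max 0 (min t ℓ) with hclamp
  have hclamp_mem : ∀ t, clamp t ∈ Icc 0 ℓ := fun t =>
    ⟨le_max_left _ _, max_le hℓ0 (min_le_right _ _)⟩
  have hclamp_id : ∀ p, 0 ≤ p → p ≤ ℓ → clamp p = p := by
    intro p h1 h2
    simp only [hclamp, min_eq_left h2, max_eq_right h1]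
  set ξ := γ ∘ clamp with hξ
  have hξlip : LipschitzWith 1 ξ := by
    have h2 : LipschitzOnWith (1*1) (γ ∘ clamp) univ :=
      hlipγ.comp ((clamp_lipschitz ℓ).lipschitzOnWith) (fun t _ => hclamp_mem t)
    rw [mul_one] at h2
    exact lipschitzOnWith_univ.mp h2
  have hξ0 : ξ 0 = x := by
    show γ (clamp 0) = x
    rw [hclamp_id 0 le_rfl hℓ0, hγx]
  have hξend : ∀ t, ℓ ≤ t → ξ t = y := by
    intro t h
    show γ (clamp t) = y
    have : clamp t = ℓ := by simp only [hclamp, min_eq_right h, max_eq_right hℓ0]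
    rw [this, hγy]
  have hℓbound : ℓ ≤ intrinsicDist x y + ε := by
    have h1 : ℓ ≤ B.toReal := ENNReal.toReal_mono hBt hlt.le
    rwa [hB, ENNReal.toReal_add hrect.ne ENNReal.ofReal_ne_top,
      ENNReal.toReal_ofReal hε.le] at h1
  refine ⟨ξ, ℓ, hℓ0, hℓbound, hξlip, hξ0, hξend, ?_⟩
  intro p q hp hpq hq
  have hp0ℓ : p ∈ Icc 0 ℓ := ⟨hp, hpq.trans hq⟩
  have hq0ℓ : q ∈ Icc 0 ℓ := ⟨hp.trans hpq, hq⟩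
  set φa : ℝ → ℝ := fun u => p + u * (q - p) with hφa
  have hφmono : MonotoneOn φa (Icc (0:ℝ) 1) := by
    intro u hu v hv huv
    simp only [hφa]
    nlinarith
  have hφmaps : MapsTo φa (Icc (0:ℝ) 1) (Icc p q) := by
    intro u hu
    constructor
    · simp only [hφa]; nlinarith [hu.1, hu.2]
    · simp only [hφa]; nlinarith [hu.1, hu.2]
  have hψcont : ContinuousOn (ξ ∘ φa) (Icc (0:ℝ) 1) :=
    (hξlip.continuous.comp
      ((continuous_const.add (continuous_id.mul continuous_const)) : Continuous φa)).continuousOn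
  have hψ0 : (ξ ∘ φa) 0 = ξ p := by simp [hφa]
  have hψ1 : (ξ ∘ φa) 1 = ξ q := by simp [hφa]
  have hstep1 : intrinsicEDist (ξ p) (ξ q) ≤ eVariationOn (ξ ∘ φa) (Icc 0 1) := by
    rw [intrinsicEDist]
    refine iInf_le_of_le (ξ ∘ φa) ?_
    refine iInf_le_of_le hψcont ?_
    refine iInf_le_of_le hψ0 ?_
    exact iInf_le_of_le hψ1 le_rfl
  have hstep2 : eVariationOn (ξ ∘ φa) (Icc (0:ℝ) 1) ≤ eVariationOn ξ (Icc p q) :=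
    eVariationOn.comp_le_of_monotoneOn ξ φa hφmono hφmaps
  have hstep3 : eVariationOn ξ (Icc p q) = eVariationOn γ (Icc p q) :=
    eVariationOn.eq_of_eqOn (fun z hz => by
      show γ (clamp z) = γ z
      rw [hclamp_id z (hp.trans hz.1) (hz.2.trans hq)])
  have hstep4 : eVariationOn γ (Icc p q) = ENNReal.ofReal ((1:NNReal) * (q - p)) := by
    rw [← inter_eq_self_of_subset_right (Icc_subset_Icc hp hq : Icc p q ⊆ Icc 0 ℓ)]
    exact hunit hp0ℓ hq0ℓ
  calc intrinsicEDist (ξ p) (ξ q) ≤ eVariationOn ξ (Icc p q) := hstep1.trans hstep2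
    _ = ENNReal.ofReal (q - p) := by rw [hstep3, hstep4, NNReal.coe_one, one_mul]

end CurveAux

/-- boundary consistency estimate. If `f` is continuous, bounded
and nonnegative on `cl Ω` and `ζ` is `L`-Lipschitz on `∂Ω` with respect to the
intrinsic metric `d̃`, then the value function `u` of the control problem
satisfies `u(x) − ζ(y) ≤ d̃(x,y)·max{L, sup_{cl Ω} f}`. -/
theorem boundary_consistency {X : Type*} [MetricSpace X] [CompleteSpace X]
    (hrect : ∀ x y : X, intrinsicEDist x y < ⊤)
    (hcons : ∀ ε > (0 : ℝ), ∃ δ > (0 : ℝ), ∀ x y : X,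
      dist x y < δ → intrinsicDist x y < ε)
    (Ω : Set X) (hΩ : IsOpen Ω) (hΩne : Ω ≠ Set.univ)
    (f : X → ℝ) (hf : ContinuousOn f (closure Ω))
    (hf0 : ∀ x ∈ closure Ω, 0 ≤ f x)
    (C : ℝ) (hfC : ∀ x ∈ closure Ω, f x ≤ C)
    (ζ : X → ℝ) (L : ℝ) (hL : 0 ≤ L)
    (hζ : ∀ y₁ ∈ frontier Ω, ∀ y₂ ∈ frontier Ω,
      |ζ y₁ - ζ y₂| ≤ L * intrinsicDist y₁ y₂)
    (hbdd : ∀ x ∈ Ω, BddBelow (controlSet Ω f ζ x)) :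
    ∀ x ∈ Ω, ∀ y ∈ frontier Ω,
      uControl Ω f ζ x - ζ y ≤ intrinsicDist x y * max L C := by
  intro x hx y hy
  set M := max L C with hM
  have hclx : x ∈ closure Ω := subset_closure hx
  have hC0 : 0 ≤ C := le_trans (hf0 x hclx) (hfC x hclx)
  have hM0 : 0 ≤ M := le_trans hC0 (le_max_right _ _)
  have hLM : L ≤ M := le_max_left _ _
  have hCM : C ≤ M := le_max_right _ _
  have hyΩ : y ∉ Ω := by
    rw [hΩ.frontier_eq] at hy; exact hy.2
  apply le_of_forall_pos_le_add
  intro ε hε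
  set ε' := ε / (M + 1) with hε'
  have hε'0 : 0 < ε' := div_pos hε (by linarith)
  obtain ⟨ξ, ℓ, hℓ0, hℓb, hξlip, hξ0, hξend, hξseg⟩ := exists_good_curve x y hε'0 (hrect x y)
  have hξℓ : ξ ℓ = y := hξend ℓ le_rfl
  set S := {t : ℝ | 0 ≤ t ∧ ξ t ∉ Ω} with hS
  have hℓS : ℓ ∈ S := ⟨hℓ0, by rw [hξℓ]; exact hyΩ⟩
  have hSne : S.Nonempty := ⟨ℓ, hℓS⟩
  have hSbdd : BddBelow S := ⟨0, fun t ht => ht.1⟩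
  have hSclosed : IsClosed S := by
    have hSeq : S = Set.Ici (0:ℝ) ∩ ξ ⁻¹' Ωᶜ := by
      ext t; simp [hS, Set.mem_Ici, Set.mem_preimage]
    rw [hSeq]
    exact isClosed_Ici.inter (hΩ.isClosed_compl.preimage hξlip.continuous)
  set T := exitTime Ω ξ with hT
  have hTinf : T = sInf S := by rw [hT, exitTime]
  have hTS : T ∈ S := by rw [hTinf]; exact hSclosed.csInf_mem hSne hSbdd
  have hT0 : 0 ≤ T := hTS.1
  have hTℓ : T ≤ ℓ := by rw [hTinf]; exact csInf_le hSbdd hℓS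
  have hTin : ∀ s, 0 ≤ s → s < T → ξ s ∈ Ω := by
    intro s h1 h2; by_contra hns
    have : T ≤ s := by rw [hTinf]; exact csInf_le hSbdd ⟨h1, hns⟩
    linarith
  have hTpos : 0 < T := by
    rcases eq_or_lt_of_le hT0 with h | h
    · exfalso; apply hTS.2; rw [← h, hξ0]; exact hx
    · exact h
  have hfront : ξ T ∈ frontier Ω := by
    rw [hΩ.frontier_eq]
    refine ⟨?_, hTS.2⟩
    have htend : Filter.Tendsto ξ (nhdsWithin T (Set.Iio T)) (nhds (ξ T)) :=
      (hξlip.continuous.tendsto T).mono_left nhdsWithin_le_nhds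
    apply mem_closure_of_tendsto htend
    filter_upwards [Ioo_mem_nhdsLT_of_mem (⟨hTpos, le_rfl⟩ : T ∈ Set.Ioc 0 T)] with s hs
    exact hTin s hs.1.le hs.2
  have hclT : ξ T ∈ closure Ω := (hΩ.frontier_eq ▸ hfront).1
  have hmemctl : (∫ s in (0:ℝ)..T, f (ξ s)) + ζ (ξ T) ∈ controlSet Ω f ζ x := by
    refine ⟨ξ, ⟨hξlip, hξ0, ℓ, hℓ0, by rw [hξℓ]; exact hyΩ⟩, ?_⟩
    beta_reduce
    rw [← hT]
  have hu_le : uControl Ω f ζ x ≤ (∫ s in (0:ℝ)..T, f (ξ s)) + ζ (ξ T) :=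
    csInf_le (hbdd x hx) hmemctl
  have hmapsclos : Set.MapsTo ξ (Set.Icc 0 T) (closure Ω) := by
    intro s hs
    rcases lt_or_eq_of_le hs.2 with h | h
    · exact subset_closure (hTin s hs.1 h)
    · rw [h]; exact hclT
  have hcontfξ : ContinuousOn (fun s => f (ξ s)) (Set.Icc 0 T) :=
    hf.comp hξlip.continuous.continuousOn hmapsclos
  have hint1 : IntervalIntegrable (fun s => f (ξ s)) MeasureTheory.volume 0 T := by
    apply ContinuousOn.intervalIntegrable
    rwa [Set.uIcc_of_le hT0]
  have hintbound : (∫ s in (0:ℝ)..T, f (ξ s)) ≤ C * T := by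
    have h2 : (∫ s in (0:ℝ)..T, f (ξ s)) ≤ ∫ _ in (0:ℝ)..T, C :=
      intervalIntegral.integral_mono_on hT0 hint1 intervalIntegrable_const
        (fun s hs => hfC _ (hmapsclos hs))
    rwa [intervalIntegral.integral_const, smul_eq_mul, sub_zero, mul_comm] at h2
  have hd1 : intrinsicEDist (ξ T) y ≤ ENNReal.ofReal (ℓ - T) := by
    have := hξseg T ℓ hT0 hTℓ le_rfl
    rwa [hξℓ] at this
  have hd2 : intrinsicDist (ξ T) y ≤ ℓ - T := by
    rw [intrinsicDist]
    calc (intrinsicEDist (ξ T) y).toReal ≤ (ENNReal.ofReal (ℓ - T)).toReal :=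
          ENNReal.toReal_mono ENNReal.ofReal_ne_top hd1
      _ = ℓ - T := ENNReal.toReal_ofReal (by linarith)
  have hζb : ζ (ξ T) - ζ y ≤ L * (ℓ - T) := by
    have h1 := hζ (ξ T) hfront y hy
    have h2 : ζ (ξ T) - ζ y ≤ L * intrinsicDist (ξ T) y := (le_abs_self _).trans h1
    calc ζ (ξ T) - ζ y ≤ L * intrinsicDist (ξ T) y := h2
      _ ≤ L * (ℓ - T) := mul_le_mul_of_nonneg_left hd2 hL
  have hd0 : 0 ≤ intrinsicDist x y := ENNReal.toReal_nonneg
  have hMε : M * ε' ≤ ε := by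
    have h : M / (M + 1) ≤ 1 := (div_le_one (by linarith)).mpr (by linarith)
    calc M * ε' = (M / (M + 1)) * ε := by rw [hε']; ring
      _ ≤ 1 * ε := mul_le_mul_of_nonneg_right h hε.le
      _ = ε := one_mul ε
  have hc1 : C * T + L * (ℓ - T) ≤ M * ℓ := by nlinarith
  have hc2 : M * ℓ ≤ M * (intrinsicDist x y + ε') := mul_le_mul_of_nonneg_left hℓb hM0
  have hc3 : uControl Ω f ζ x ≤ C * T + (ζ y + L * (ℓ - T)) := by linarith
  nlinarith [hMε]
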